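/- Let d ≥ 3, q nonzero with q^i ≠ 1 for 1 ≤ i ≤ d and q^{d−1} + 1 ≠ 0. Suppose θ_i = η + μq^i + hq^{d−i}, θ*_i = η* + μ*q^i + h*q^{d−i} with the θ_i and θ*_i each pairwise distinct, and φ_i = (q^i−1)(q^{d−i+1}−1)(τ − μμ*q^{i−1} − hh*q^{d−i}). If τ = 0 and h + μ = 0, then a_i = η for all 0 ≤ i ≤ d, where a_i = θ_i + φ_i/(θ*_i − θ*_{i−1}) − φ_{i+1}/(θ*_{i+1} − θ*_i) (with φ_0 = φ_{d+1} = 0 and the undefined boundary fractions omitted). -/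

import Mathlib

theorem stmt_11 {K : Type*} [Field K] (d : ℕ) (hd : 3 ≤ d)
    (η μ h ηs μs hs τ q : K) (hq : q ≠ 0)
    (hqpow : ∀ i, 1 ≤ i → i ≤ d → q ^ i ≠ 1)
    (hqd1 : q ^ (d - 1) + 1 ≠ 0)
    (θ θs φ : ℕ → K)
    (hθ : ∀ i, i ≤ d → θ i = η + μ * q ^ i + h * q ^ (d - i))
    (hθs : ∀ i, i ≤ d → θs i = ηs + μs * q ^ i + hs * q ^ (d - i))
    (hφ : ∀ i, 1 ≤ i → i ≤ d →
      φ i = (q ^ i - 1) * (q ^ (d - i + 1) - 1) * (τ - μ * μs * q ^ (i - 1) - h * hs * q ^ (d - i)))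
    (hθinj : ∀ i j, i ≤ d → j ≤ d → i ≠ j → θ i ≠ θ j)
    (hθsinj : ∀ i j, i ≤ d → j ≤ d → i ≠ j → θs i ≠ θs j)
    (hτ : τ = 0) (hhμ : h + μ = 0) :
    ∀ i, i ≤ d →
      θ i + (if i = 0 then 0 else φ i / (θs i - θs (i - 1)))
          - (if i = d then 0 else φ (i + 1) / (θs (i + 1) - θs i))
        = η := by
  have hq1 : q - 1 ≠ 0 :=
    sub_ne_zero.2 (by simpa using hqpow 1 le_rfl (by omega))
  have hμ : h = -μ := by linear_combination hhμ
  have frac : ∀ j, 1 ≤ j → j ≤ d →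
      φ j / (θs j - θs (j-1)) = -μ * ((q^(j-1)*q - 1) * (q^(d-j)*q - 1)) / (q - 1) := by
    intro j hj1 hjd
    have hd1 : d - (j-1) = (d-j) + 1 := by omega
    have hpj : q ^ j = q ^ (j-1) * q := by rw [← pow_succ]; congr 1; omega
    have hne : θs j - θs (j-1) ≠ 0 :=
      sub_ne_zero.2 (hθsinj j (j-1) hjd (by omega) (by omega))
    have hθsj := hθs j hjd
    have hθsj1 := hθs (j-1) (by omega)
    rw [hd1, pow_succ] at hθsj1
    have hΔ : θs j - θs (j-1) = (q - 1) * (μs * q^(j-1) - hs * q^(d-j)) := by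
      rw [hθsj, hθsj1, hpj]; ring
    have hX : μs * q^(j-1) - hs * q^(d-j) ≠ 0 := by
      intro h0
      exact hne (by rw [hΔ, h0, mul_zero])
    rw [hφ j hj1 hjd, hΔ, hτ, hμ, pow_succ, hpj]
    rw [div_eq_div_iff (mul_ne_zero hq1 hX) hq1]
    ring
  intro i hi
  rcases eq_or_ne i 0 with rfl | hi0
  · rw [if_pos rfl, if_neg (show (0:ℕ) ≠ d by omega)]
    have hf := frac 1 le_rfl (by omega)
    rw [show (1:ℕ) - 1 = 0 from rfl] at hf
    rw [hf]
    have h2 : q ^ (d-1) * q = q ^ d := by rw [← pow_succ]; congr 1; omega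
    rw [h2, hθ 0 (by omega), hμ]
    simp only [Nat.sub_zero, pow_zero]
    field_simp
    ring
  · rcases eq_or_ne i d with rfl | hid
    · rw [if_neg hi0, if_pos rfl, frac i (by omega) le_rfl]
      have h2 : q ^ (i-1) * q = q ^ i := by rw [← pow_succ]; congr 1; omega
      rw [h2, hθ i le_rfl, hμ]
      simp only [Nat.sub_self, pow_zero]
      field_simp
      ring
    · rw [if_neg hi0, if_neg hid]
      have hf1 := frac i (by omega) hi
      have hf2 := frac (i+1) (by omega) (by omega)
      rw [Nat.add_sub_cancel, show d - (i+1) = d - i - 1 by omega] at hf2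
      rw [hf1, hf2]
      have hpi : q ^ i = q ^ (i-1) * q := by rw [← pow_succ]; congr 1; omega
      have hpd : q ^ (d-i) = q ^ (d-i-1) * q := by rw [← pow_succ]; congr 1; omega
      rw [hθ i hi, hμ, hpi, hpd]
      field_simp
      ring
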